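/- For all integers i with 0 < i < N, where N = 2^n, we have S(i,N) = S(N-i,N), where S(i,N) = Σ_{k=1}^{n} f(i,k). -/

import Mathlib

/-- Number of dimension-`k` links crossing intercolumn position `i`
(least nonnegative residue mod `2^k`). -/
def f (i : ℤ) (k : ℕ) : ℤ := (i * (1 - 2 * (((i - 1) / 2 ^ (k - 1)) % 2))) % 2 ^ k

/-- Total wire density at intercolumn position `i` for `N = 2^n`. -/
def S (i : ℤ) (n : ℕ) : ℤ := ∑ k ∈ Finset.Icc 1 n, f i k

/-- The `j`-th binary digit of `i`, counting from 1 at the right. -/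
def b (i : ℤ) (j : ℕ) : ℤ := (i / 2 ^ (j - 1)) % 2

/-- Excess of 1's over 0's among bit positions `j+1, ..., n` of `i`. -/
def e (i : ℤ) (j n : ℕ) : ℤ := ∑ l ∈ Finset.Icc (j + 1) n, (2 * b i l - 1)

/-- Maximum wire density `m(N)` for `N = 2^n`. -/
def m (n : ℕ) : ℤ := (4 * 2 ^ n - (-1) ^ n - 3) / 6

/-- Leftmost maximizing position `p(N)` for `N = 2^n`. -/
def p (n : ℕ) : ℤ := (2 ^ n - (-1) ^ n) / 3


lemma f_period (i : ℤ) (k : ℕ) (hk : 1 ≤ k) (m : ℤ) : f (i + m * 2 ^ k) k = f i k := by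
  obtain ⟨j, rfl⟩ : ∃ j, k = j + 1 := ⟨k - 1, by omega⟩
  simp only [f, Nat.add_sub_cancel]
  have h1 : i + m * 2 ^ (j + 1) - 1 = (i - 1) + (2 * m) * 2 ^ j := by ring
  rw [h1, Int.add_mul_ediv_right _ _ (by positivity)]
  have h2 : ((i - 1) / 2 ^ j + 2 * m) % 2 = ((i - 1) / 2 ^ j) % 2 := by
    omega
  rw [h2]
  have h3 : (i + m * 2 ^ (j+1)) * (1 - 2 * ((i - 1) / 2 ^ j % 2))
      = i * (1 - 2 * ((i - 1) / 2 ^ j % 2)) + (m * (1 - 2 * ((i - 1) / 2 ^ j % 2))) * 2 ^ (j+1) := by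
    ring
  rw [h3, Int.add_mul_emod_self_right]

lemma f_emod (i : ℤ) (k : ℕ) (hk : 1 ≤ k) : f i k = f (i % 2 ^ k) k := by
  conv_lhs => rw [show i = i % 2 ^ k + (i / 2 ^ k) * 2 ^ k by rw [Int.emod_add_ediv_mul]]
  rw [f_period _ _ hk]

lemma f_core (k : ℕ) (hk : 1 ≤ k) (r : ℤ) (h1 : 0 < r) (h2 : r < 2 ^ k) :
    f r k = f (2 ^ k - r) k := by
  obtain ⟨j, rfl⟩ : ∃ j, k = j + 1 := ⟨k - 1, by omega⟩
  set h : ℤ := 2 ^ j with hh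
  have hpos : 0 < h := by positivity
  have h2k : (2 : ℤ) ^ (j + 1) = 2 * h := by rw [hh]; ring
  simp only [f, Nat.add_sub_cancel, ← hh, h2k] at *
  rcases lt_trichotomy r h with hr | hr | hr
  · have e1 : (r - 1) / h = 0 := Int.ediv_eq_zero_of_lt (by omega) (by omega)
    have e2 : (2 * h - r - 1) / h = 1 := by
      rw [show 2 * h - r - 1 = (h - r - 1) + 1 * h by ring,
        Int.add_mul_ediv_right _ _ (by omega),
        Int.ediv_eq_zero_of_lt (by omega) (by omega)]
      norm_num
    rw [e1, e2]
    norm_num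
  · subst hr
    rw [show 2 * h - h = h by ring]
  · have e1 : (r - 1) / h = 1 := by
      rw [show r - 1 = (r - 1 - h) + 1 * h by ring,
        Int.add_mul_ediv_right _ _ (by omega),
        Int.ediv_eq_zero_of_lt (by omega) (by omega)]
      norm_num
    have e2 : (2 * h - r - 1) / h = 0 := Int.ediv_eq_zero_of_lt (by omega) (by omega)
    rw [e1, e2]
    norm_num

theorem S_symmetry_aux (n : ℕ) (hn : 1 ≤ n) (i : ℤ) (hi0 : 0 < i) (hiN : i < 2 ^ n) :
    (∑ k ∈ Finset.Icc 1 n, f i k) = ∑ k ∈ Finset.Icc 1 n, f (2 ^ n - i) k := by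
  apply Finset.sum_congr rfl
  intro k hk
  simp only [Finset.mem_Icc] at hk
  have hk1 : 1 ≤ k := hk.1
  have hkpos : (0 : ℤ) < 2 ^ k := by positivity
  obtain ⟨c, hc⟩ : (2 : ℤ) ^ k ∣ 2 ^ n := pow_dvd_pow 2 hk.2
  have hmod : ((2 : ℤ) ^ n - i) % 2 ^ k = (-i) % 2 ^ k := by
    rw [hc, show 2 ^ k * c - i = -i + c * 2 ^ k by ring, Int.add_mul_emod_self_right]
  rw [f_emod i k hk1, f_emod (2 ^ n - i) k hk1, hmod]
  set r := i % 2 ^ k with hr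
  rcases eq_or_ne r 0 with h0 | h0
  · have hdi : (2 : ℤ) ^ k ∣ i := Int.dvd_of_emod_eq_zero h0
    have : (-i) % 2 ^ k = 0 := Int.emod_eq_zero_of_dvd (dvd_neg.mpr hdi)
    rw [h0, this]
  · have hr0 : 0 < r := lt_of_le_of_ne (Int.emod_nonneg i (by positivity)) (Ne.symm h0)
    have hr2 : r < 2 ^ k := Int.emod_lt_of_pos i hkpos
    have hneg : (-i) % 2 ^ k = 2 ^ k - r := by
      have hi : i = r + (i / 2 ^ k) * 2 ^ k := by rw [hr, Int.emod_add_ediv_mul]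
      rw [show -i = (2 ^ k - r) + (-(i / 2 ^ k) - 1) * 2 ^ k by linear_combination -hi,
        Int.add_mul_emod_self_right, Int.emod_eq_of_lt (by omega) (by omega)]
    rw [hneg, f_core k hk1 r hr0 hr2]


theorem S_symmetry (n : ℕ) (hn : 1 ≤ n) (i : ℤ) (hi0 : 0 < i) (hiN : i < 2 ^ n) :
    S i n = S (2 ^ n - i) n := by
  unfold S
  exact S_symmetry_aux n hn i hi0 hiN
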